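/- Let N be an odd positive integer and set μ = sin(π/(2(N+2))). Then for every k = 1,…,N, the number α_k = (−1)^{k−1} · U'_{N−k+1}(μ) · U_{k−1}(μ) / U'_N(μ) is strictly positive. -/

import Mathlib

/-- Evaluation of the Chebyshev polynomial of the second kind. -/
noncomputable def Ucheb (n : ℤ) (x : ℝ) : ℝ := (Polynomial.Chebyshev.U ℝ n).eval x

/-- Evaluation of the derivative of the Chebyshev polynomial of the second kind. -/
noncomputable def Ucheb' (n : ℤ) (x : ℝ) : ℝ :=
  (Polynomial.derivative (Polynomial.Chebyshev.U ℝ n)).eval x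

lemma Ucheb'_cos (n : ℤ) (θ : ℝ) :
    Ucheb' n (Real.cos θ) * Real.sin θ ^ 2 =
      Ucheb n (Real.cos θ) * Real.cos θ - ((n : ℝ) + 1) * Real.cos (((n : ℝ) + 1) * θ) := by
  have h1 : HasDerivAt (fun t => (Polynomial.Chebyshev.U ℝ n).eval (Real.cos t) * Real.sin t)
      (((Polynomial.derivative (Polynomial.Chebyshev.U ℝ n)).eval (Real.cos θ) * (-Real.sin θ))
          * Real.sin θ
        + (Polynomial.Chebyshev.U ℝ n).eval (Real.cos θ) * Real.cos θ) θ :=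
    (((Polynomial.Chebyshev.U ℝ n).hasDerivAt (Real.cos θ)).comp θ (Real.hasDerivAt_cos θ)).mul
      (Real.hasDerivAt_sin θ)
  have h2 : HasDerivAt (fun t : ℝ => Real.sin (((n : ℝ) + 1) * t))
      (Real.cos (((n : ℝ) + 1) * θ) * ((n : ℝ) + 1)) θ :=
    (Real.hasDerivAt_sin _).comp θ (by simpa using (hasDerivAt_id θ).const_mul ((n : ℝ) + 1))
  have heq : (fun t => (Polynomial.Chebyshev.U ℝ n).eval (Real.cos t) * Real.sin t)
      = (fun t : ℝ => Real.sin (((n : ℝ) + 1) * t)) := by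
    funext t
    rw [Polynomial.Chebyshev.U_real_cos]
  rw [heq] at h1
  have h3 := h1.unique h2
  simp only [Ucheb, Ucheb']
  nlinarith [h3, Polynomial.Chebyshev.U_real_cos θ n]

lemma Ucheb'_cos3 (n : ℤ) (θ : ℝ) :
    Ucheb' n (Real.cos θ) * Real.sin θ ^ 3 =
      Real.sin (((n : ℝ) + 1) * θ) * Real.cos θ
        - ((n : ℝ) + 1) * Real.cos (((n : ℝ) + 1) * θ) * Real.sin θ := by
  have h := Ucheb'_cos n θ
  have hA := Polynomial.Chebyshev.U_real_cos θ n
  have hA' : Ucheb n (Real.cos θ) * Real.sin θ = Real.sin (((n : ℝ) + 1) * θ) := hA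
  linear_combination Real.sin θ * h + Real.cos θ * hA'

lemma sin_even_aux (b : ℕ) (x : ℝ) :
    Real.sin (((2*b : ℕ) : ℝ) * (Real.pi/2 - x)) = (-1)^(b+1) * Real.sin (((2*b : ℕ) : ℝ) * x) := by
  have h : ((2*b : ℕ) : ℝ) * (Real.pi/2 - x) = -(((2*b:ℕ):ℝ) * x) + (b : ℤ) * Real.pi := by
    push_cast; ring
  rw [h, Real.sin_add_int_mul_pi, Real.sin_neg]
  simp [pow_succ]; try ring

lemma cos_even_aux (b : ℕ) (x : ℝ) :
    Real.cos (((2*b : ℕ) : ℝ) * (Real.pi/2 - x)) = (-1)^b * Real.cos (((2*b : ℕ) : ℝ) * x) := by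
  have h : ((2*b : ℕ) : ℝ) * (Real.pi/2 - x) = -(((2*b:ℕ):ℝ) * x) + (b : ℤ) * Real.pi := by
    push_cast; ring
  rw [h, Real.cos_add_int_mul_pi, Real.cos_neg]
  simp

lemma sin_odd_aux (b : ℕ) (x : ℝ) :
    Real.sin (((2*b+1 : ℕ) : ℝ) * (Real.pi/2 - x)) = (-1)^b * Real.cos (((2*b+1 : ℕ) : ℝ) * x) := by
  have h : ((2*b+1 : ℕ) : ℝ) * (Real.pi/2 - x)
      = (Real.pi/2 - ((2*b+1:ℕ):ℝ) * x) + (b : ℤ) * Real.pi := by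
    push_cast; ring
  rw [h, Real.sin_add_int_mul_pi, Real.sin_pi_div_two_sub]
  simp

lemma cos_odd_aux (b : ℕ) (x : ℝ) :
    Real.cos (((2*b+1 : ℕ) : ℝ) * (Real.pi/2 - x)) = (-1)^b * Real.sin (((2*b+1 : ℕ) : ℝ) * x) := by
  have h : ((2*b+1 : ℕ) : ℝ) * (Real.pi/2 - x)
      = (Real.pi/2 - ((2*b+1:ℕ):ℝ) * x) + (b : ℤ) * Real.pi := by
    push_cast; ring
  rw [h, Real.cos_add_int_mul_pi, Real.cos_pi_div_two_sub]
  simp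

set_option maxHeartbeats 1000000 in
theorem stmt18 (N : ℕ) (hN : 0 < N) (hNodd : Odd N)
    (μ : ℝ) (hμ : μ = Real.sin (Real.pi / (2 * (N + 2)))) :
    ∀ k : ℕ, 1 ≤ k → k ≤ N →
      0 < (-1 : ℝ) ^ (k - 1) * Ucheb' ((N : ℤ) - k + 1) μ * Ucheb ((k : ℤ) - 1) μ
            / Ucheb' (N : ℤ) μ := by
  intro k hk1 hkN
  set φ : ℝ := Real.pi / (2 * ((N : ℝ) + 2)) with hφdef
  have hθ : μ = Real.cos (Real.pi/2 - φ) := by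
    rw [hμ, Real.cos_pi_div_two_sub]
  have hπ := Real.pi_pos
  have hφpos : 0 < φ := by positivity
  have hφeq : φ * (2 * ((N : ℝ) + 2)) = Real.pi := by
    rw [hφdef]; exact div_mul_cancel₀ _ (by positivity)
  -- bounds for j * φ
  have hjb : ∀ j : ℕ, j ≤ N + 1 → (j : ℝ) * φ < Real.pi / 2 := by
    intro j hj
    have hjr : (j : ℝ) ≤ (N : ℝ) + 1 := by exact_mod_cast hj
    nlinarith [hφpos, hφeq]
  have hsc : ∀ j : ℕ, 1 ≤ j → j ≤ N + 1 →
      0 < Real.sin ((j : ℝ) * φ) ∧ 0 < Real.cos ((j : ℝ) * φ) := by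
    intro j hj1 hj2
    have hjr : (1 : ℝ) ≤ (j : ℝ) := by exact_mod_cast hj1
    have hpos : 0 < (j : ℝ) * φ := by nlinarith
    have hlt := hjb j hj2
    constructor
    · exact Real.sin_pos_of_pos_of_lt_pi hpos (by linarith)
    · exact Real.cos_pos_of_mem_Ioo ⟨by linarith, hlt⟩
  have hs1 : 0 < Real.sin ((1 : ℕ) * φ) ∧ 0 < Real.cos ((1 : ℕ) * φ) :=
    hsc 1 le_rfl (by omega)
  have hsφ : 0 < Real.sin φ := by simpa using hs1.1
  have hcφ : 0 < Real.cos φ := by simpa using hs1.2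
  -- odd N structure
  obtain ⟨cc, hNcc⟩ := hNodd
  set c : ℕ := cc + 1 with hcdef
  have hc : N + 1 = 2 * c := by omega
  have hc1 : 1 ≤ c := by omega
  -- evaluation of U_{k-1}
  have e2 : Ucheb ((k : ℤ) - 1) μ * Real.cos φ = Real.sin (((k : ℕ) : ℝ) * (Real.pi/2 - φ)) := by
    have h := Polynomial.Chebyshev.U_real_cos (Real.pi/2 - φ) ((k : ℤ) - 1)
    rw [Real.sin_pi_div_two_sub] at h
    have hcast : ((((k : ℤ) - 1 : ℤ) : ℝ) + 1) = ((k : ℕ) : ℝ) := by push_cast; ring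
    rw [hcast] at h
    rw [hθ]
    exact h
  -- evaluation of U'_{N-k+1}
  have hkN2 : k ≤ N + 2 := by omega
  have e1 : Ucheb' ((N : ℤ) - k + 1) μ * Real.cos φ ^ 3 =
      Real.sin (((N + 2 - k : ℕ) : ℝ) * (Real.pi/2 - φ)) * Real.sin φ
        - ((N + 2 - k : ℕ) : ℝ) * Real.cos (((N + 2 - k : ℕ) : ℝ) * (Real.pi/2 - φ))
            * Real.cos φ := by
    have h := Ucheb'_cos3 ((N : ℤ) - k + 1) (Real.pi/2 - φ)
    rw [Real.sin_pi_div_two_sub, Real.cos_pi_div_two_sub] at h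
    have hcast : ((((N : ℤ) - k + 1 : ℤ) : ℝ) + 1) = ((N + 2 - k : ℕ) : ℝ) := by
      rw [Nat.cast_sub hkN2]; push_cast; ring
    rw [hcast] at h
    rw [hθ, Real.cos_pi_div_two_sub]
    exact h
  -- evaluation of U'_N
  have e3 : Ucheb' (N : ℤ) μ * Real.cos φ ^ 3 =
      Real.sin (((2 * c : ℕ) : ℝ) * (Real.pi/2 - φ)) * Real.sin φ
        - ((2 * c : ℕ) : ℝ) * Real.cos (((2 * c : ℕ) : ℝ) * (Real.pi/2 - φ)) * Real.cos φ := by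
    have h := Ucheb'_cos3 (N : ℤ) (Real.pi/2 - φ)
    rw [Real.sin_pi_div_two_sub, Real.cos_pi_div_two_sub] at h
    have hcast : (((N : ℤ) : ℝ) + 1) = ((2 * c : ℕ) : ℝ) := by
      have hN' : (N : ℝ) = 2 * (cc : ℝ) + 1 := by exact_mod_cast congrArg (fun n : ℕ => (n : ℝ)) hNcc
      push_cast [hcdef]
      linarith
    rw [hcast] at h
    rw [hθ, Real.cos_pi_div_two_sub]
    exact h
  -- simplify e3 using parity
  rw [sin_even_aux, cos_even_aux] at e3
  set Q2 : ℝ := Real.sin (((2*c : ℕ) : ℝ) * φ) * Real.sin φ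
      + ((2*c : ℕ) : ℝ) * Real.cos (((2*c : ℕ) : ℝ) * φ) * Real.cos φ with hQ2def
  have e3' : Ucheb' (N : ℤ) μ * Real.cos φ ^ 3 = (-1)^(c+1) * Q2 := by
    rw [e3, hQ2def]; ring
  have hQ2pos : 0 < Q2 := by
    have h2c := hsc (2*c) (by omega) (by omega)
    have h0 : (0:ℝ) < ((2*c : ℕ) : ℝ) := by
      have : 0 < 2*c := by omega
      exact_mod_cast this
    rw [hQ2def]
    exact add_pos (mul_pos h2c.1 hsφ) (mul_pos (mul_pos h0 h2c.2) hcφ)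
  have hCne : Ucheb' (N : ℤ) μ ≠ 0 := by
    intro h
    rw [h, zero_mul] at e3'
    have : ((-1 : ℝ))^(c+1) * Q2 ≠ 0 :=
      mul_ne_zero (pow_ne_zero _ (by norm_num)) hQ2pos.ne'
    exact this e3'.symm
  -- main positivity of the numerator times denominator
  have hprod : 0 < ((-1 : ℝ) ^ (k - 1) * Ucheb' ((N : ℤ) - k + 1) μ * Ucheb ((k : ℤ) - 1) μ)
      * Ucheb' (N : ℤ) μ := by
    have hcos7 : (0:ℝ) < Real.cos φ ^ 7 := by positivity
    have key : (((-1 : ℝ) ^ (k - 1) * Ucheb' ((N : ℤ) - k + 1) μ * Ucheb ((k : ℤ) - 1) μ)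
        * Ucheb' (N : ℤ) μ) * Real.cos φ ^ 7
        = (-1 : ℝ) ^ (k - 1) * (Ucheb' ((N : ℤ) - k + 1) μ * Real.cos φ ^ 3)
          * (Ucheb ((k : ℤ) - 1) μ * Real.cos φ)
          * (Ucheb' (N : ℤ) μ * Real.cos φ ^ 3) := by ring
    rw [e1, e2, e3'] at key
    have hmain : 0 < (((-1 : ℝ) ^ (k - 1) * Ucheb' ((N : ℤ) - k + 1) μ
        * Ucheb ((k : ℤ) - 1) μ) * Ucheb' (N : ℤ) μ) * Real.cos φ ^ 7 := by
      rw [key]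
      rcases Nat.even_or_odd k with ⟨a, hka⟩ | ⟨a, hka⟩
      · -- k even : k = a + a
        have hk2 : k = 2 * a := by omega
        set b : ℕ := c - a with hbdef
        have hb1 : 1 ≤ b := by omega
        have hab : a + b = c := by omega
        have hj1 : N + 2 - k = 2*b + 1 := by omega
        rw [hj1, hk2, sin_odd_aux, cos_odd_aux, sin_even_aux]
        rw [show 2*a - 1 = 2*a - 1 from rfl]
        -- bracket for odd index
        have hJ := hsc (2*b+1) (by omega) (by omega)
        have h2b := hsc (2*b) (by omega) (by omega)
        have h2a := hsc (2*a) (by omega) (by omega)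
        have hsub : Real.sin (((2*b+1 : ℕ) : ℝ) * φ) * Real.cos φ
            - Real.cos (((2*b+1 : ℕ) : ℝ) * φ) * Real.sin φ
            = Real.sin (((2*b : ℕ) : ℝ) * φ) := by
          rw [← Real.sin_sub]; congr 1; push_cast; ring
        have hR : Real.sin φ * Real.cos (((2*b+1 : ℕ) : ℝ) * φ)
            - ((2*b+1 : ℕ) : ℝ) * Real.sin (((2*b+1 : ℕ) : ℝ) * φ) * Real.cos φ < 0 := by
          have hb' : (0:ℝ) ≤ 2*(b:ℝ) := by positivity
          have hh : 0 ≤ 2*(b:ℝ) * (Real.sin (((2*b+1 : ℕ) : ℝ) * φ) * Real.cos φ) :=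
            mul_nonneg hb' (le_of_lt (mul_pos hJ.1 hcφ))
          have h2b1 := h2b.1
          push_cast
          push_cast at hsub hh h2b1
          nlinarith [h2b1, hsub, hh]
        set R : ℝ := Real.sin φ * Real.cos (((2*b+1 : ℕ) : ℝ) * φ)
            - ((2*b+1 : ℕ) : ℝ) * Real.sin (((2*b+1 : ℕ) : ℝ) * φ) * Real.cos φ with hRdef
        have hsign : (-1 : ℝ)^(2*a-1) * (-1)^b * (-1)^(a+1) * (-1)^(c+1) = -1 := by
          rw [← pow_add, ← pow_add, ← pow_add]
          exact Odd.neg_one_pow ⟨2*a + b, by omega⟩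
        have hexpr : (-1 : ℝ)^(2*a-1)
            * ((-1)^b * Real.cos (((2*b+1 : ℕ) : ℝ) * φ) * Real.sin φ
              - ((2*b+1 : ℕ) : ℝ) * ((-1)^b * Real.sin (((2*b+1 : ℕ) : ℝ) * φ)) * Real.cos φ)
            * ((-1)^(a+1) * Real.sin (((2*a : ℕ) : ℝ) * φ))
            * ((-1)^(c+1) * Q2)
            = ((-1 : ℝ)^(2*a-1) * (-1)^b * (-1)^(a+1) * (-1)^(c+1))
              * (R * Real.sin (((2*a : ℕ) : ℝ) * φ) * Q2) := by
          rw [hRdef]; ring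
        rw [hexpr, hsign]
        have : R * Real.sin (((2*a : ℕ) : ℝ) * φ) * Q2 < 0 :=
          mul_neg_of_neg_of_pos (mul_neg_of_neg_of_pos hR h2a.1) hQ2pos
        linarith
      · -- k odd : k = 2a + 1
        set b : ℕ := c - a with hbdef
        have hb1 : 1 ≤ b := by omega
        have hab : a + b = c := by omega
        have hj1 : N + 2 - k = 2*b := by omega
        rw [hj1, hka, sin_even_aux, cos_even_aux, sin_odd_aux]
        rw [show 2*a + 1 - 1 = 2*a from by omega]
        have h2b := hsc (2*b) (by omega) (by omega)
        have hka' := hsc (2*a+1) (by omega) (by omega)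
        set Q1 : ℝ := Real.sin (((2*b : ℕ) : ℝ) * φ) * Real.sin φ
            + ((2*b : ℕ) : ℝ) * Real.cos (((2*b : ℕ) : ℝ) * φ) * Real.cos φ with hQ1def
        have hQ1pos : 0 < Q1 := by
          have h0 : (0:ℝ) < ((2*b : ℕ) : ℝ) := by
            have : 0 < 2*b := by omega
            exact_mod_cast this
          rw [hQ1def]
          exact add_pos (mul_pos h2b.1 hsφ) (mul_pos (mul_pos h0 h2b.2) hcφ)
        have hsign : (-1 : ℝ)^(2*a) * (-1)^(b+1) * (-1)^a * (-1)^(c+1) = 1 := by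
          rw [← pow_add, ← pow_add, ← pow_add]
          exact Even.neg_one_pow ⟨2*a + b + 1, by omega⟩
        have hexpr : (-1 : ℝ)^(2*a)
            * ((-1)^(b+1) * Real.sin (((2*b : ℕ) : ℝ) * φ) * Real.sin φ
              - ((2*b : ℕ) : ℝ) * ((-1)^b * Real.cos (((2*b : ℕ) : ℝ) * φ)) * Real.cos φ)
            * ((-1)^a * Real.cos (((2*a+1 : ℕ) : ℝ) * φ))
            * ((-1)^(c+1) * Q2)
            = ((-1 : ℝ)^(2*a) * (-1)^(b+1) * (-1)^a * (-1)^(c+1))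
              * (Q1 * Real.cos (((2*a+1 : ℕ) : ℝ) * φ) * Q2) := by
          rw [hQ1def]; ring
        rw [hexpr, hsign, one_mul]
        exact mul_pos (mul_pos hQ1pos hka'.2) hQ2pos
    by_contra hX
    push_neg at hX
    exact absurd hmain (not_lt.2 (mul_nonpos_iff.2 (Or.inr ⟨hX, hcos7.le⟩)))
  rcases hCne.lt_or_gt with h | h
  · have hnum : (-1 : ℝ) ^ (k - 1) * Ucheb' ((N : ℤ) - k + 1) μ * Ucheb ((k : ℤ) - 1) μ < 0 := by
      nlinarith [hprod, h]
    exact div_pos_of_neg_of_neg hnum h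
  · have hnum : 0 < (-1 : ℝ) ^ (k - 1) * Ucheb' ((N : ℤ) - k + 1) μ * Ucheb ((k : ℤ) - 1) μ := by
      nlinarith [hprod, h]
    exact div_pos hnum h
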